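/- Let C = CD(Q, α) = Q ⊕ Qu be the Hurwitz superalgebra over a field F of characteristic 2 with dim Q = 2, obtained by the Cayley–Dickson doubling process, with even part Q and odd part Qu. If Γ is a grading on the superalgebra C by a group G that is not an elementary abelian 2-group (with G the universal group), then Q = C₀ is split and there is a canonical basis {e₁, e₂, u₁, v₁} of homogeneous elements with C₀⁰ = span{e₁,e₂}, C₁ᵍ = span{u₁}, C₁^{−g} = span{v₁} for some g ∈ G of order > 2. -/

import Mathlib

open QuadraticMap

/-- KMRT-style regularity of a quadratic form. -/
def QuadraticForm.HurwitzRegular {F C : Type*} [Field F] [AddCommGroup C] [Module F C]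
    (q : QuadraticForm F C) : Prop :=
  ∀ x : C, (∀ y : C, polar q x y = 0) → q x = 0 → x = 0

/-- The quadratic form is multiplicative. -/
def QuadraticForm.Multiplicative {F C : Type*} [Field F] [NonAssocRing C] [Module F C]
    (q : QuadraticForm F C) : Prop :=
  ∀ x y : C, q (x * y) = q x * q y

/-- Conjugation (standard involution) of a Hurwitz algebra: `x̄ = q(x,1)1 − x`. -/
def hconj {F C : Type*} [Field F] [NonAssocRing C] [Module F C]
    (q : QuadraticForm F C) (x : C) : C :=
  polar q x 1 • (1 : C) - x

set_option linter.unusedSectionVars false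
section Aux
variable {F C : Type*} [Field F] [NonAssocRing C] [Module F C] [SMulCommClass F C C]
  [IsScalarTower F C C] (q : QuadraticForm F C)

lemma hx_qadd (x y : C) : q (x + y) = q x + q y + polar q x y := by
  simp only [QuadraticMap.polar]; ring

lemma hx_L1a (hm : ∀ x y : C, q (x * y) = q x * q y) (x y z : C) :
    polar q (x*y) (x*z) = q x * polar q y z := by
  simp only [QuadraticMap.polar, ← mul_add, hm]; ring

lemma hx_L1b (hm : ∀ x y : C, q (x * y) = q x * q y) (x y z : C) :
    polar q (x*z) (y*z) = polar q x y * q z := by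
  simp only [QuadraticMap.polar, ← add_mul, hm]; ring

lemma hx_II (hm : ∀ x y : C, q (x * y) = q x * q y) (a b c d : C) :
    polar q (a*b) (c*d) + polar q (a*d) (c*b) = polar q a c * polar q b d := by
  have e : (a+c)*(b+d) = a*b + a*d + (c*b + c*d) := by
    rw [add_mul, mul_add, mul_add]
  have h := hm (a+c) (b+d)
  rw [e] at h
  rw [hx_qadd q (a*b + a*d) (c*b+c*d)] at h
  rw [hx_qadd q (a*b) (a*d)] at h
  rw [hx_qadd q (c*b) (c*d)] at h
  rw [hx_qadd q a c] at h
  rw [hx_qadd q b d] at h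
  rw [polar_add_left] at h
  rw [polar_add_right] at h
  rw [polar_add_right] at h
  rw [hm a b, hm a d, hm c b, hm c d] at h
  have h1 := hx_L1a q hm a b d
  have h2 := hx_L1a q hm c b d
  have h3 := hx_L1b q hm a c b
  have h4 := hx_L1b q hm a c d
  have hc : polar q (a*d) (c*b) = polar q (c*b) (a*d) := polar_comm _ _ _
  linear_combination h - h1 - h2 - h3 - h4

lemma hx_addself (h2 : (2:F) = 0) (v : C) : v + v = 0 := by
  have h : ((2:F)) • v = v + v := two_smul F v
  rw [h2, zero_smul] at h; exact h.symm

lemma hx_negself (h2 : (2:F) = 0) (v : C) : -v = v :=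
  neg_eq_of_add_eq_zero_left (hx_addself h2 v)

lemma hx_polarself (h2 : (2:F) = 0) (x : C) : polar q x x = 0 := by
  simp only [QuadraticMap.polar]
  rw [hx_addself h2 x, map_zero]
  linear_combination (- q x) * h2

lemma hx_bsq (hm : ∀ x y : C, q (x * y) = q x * q y) (x w : C) :
    polar q (x*x) w = polar q x 1 * polar q x w - q x * polar q 1 w := by
  have h := hx_II q hm x x 1 w
  rw [one_mul, one_mul] at h
  have h5 : polar q (x*w) x = q x * polar q w 1 := by simpa using hx_L1a q hm x w 1
  have hc : polar q w 1 = polar q 1 w := polar_comm _ _ _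
  linear_combination h - h5 - q x * hc

lemma hx_CH (h2 : (2:F) = 0)
    (hreg : ∀ x : C, (∀ y : C, polar q x y = 0) → q x = 0 → x = 0)
    (hm : ∀ x y : C, q (x * y) = q x * q y) (hq1 : q 1 = 1) (x : C) :
    x*x = polar q x 1 • x + q x • (1:C) := by
  have hsq : polar q (x*x) x = q x * polar q x 1 := by simpa using hx_L1a q hm x x 1
  have hz : x*x - (polar q x 1 • x + q x • (1:C)) = 0 := by
    apply hreg
    · intro w
      rw [polar_sub_left, polar_add_left, polar_smul_left, polar_smul_left, smul_eq_mul,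
        smul_eq_mul, hx_bsq q hm x w]
      have hc : polar q 1 w = polar q w 1 := polar_comm _ _ _
      linear_combination (- (q x * polar q 1 w)) * h2
    · rw [sub_eq_add_neg, hx_qadd, QuadraticMap.map_neg, polar_neg_right, hx_qadd,
        QuadraticMap.map_smul, QuadraticMap.map_smul, polar_smul_left, polar_smul_right,
        polar_add_right, polar_smul_right, polar_smul_right, hm, hq1, hsq,
        hx_bsq q hm x 1, hx_polarself q h2 1]
      simp only [smul_eq_mul]
      linear_combination (q x * q x) * h2
  rw [sub_eq_zero] at hz; exact hz

lemma hx_A1 (h2 : (2:F) = 0)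
    (hreg : ∀ x : C, (∀ y : C, polar q x y = 0) → q x = 0 → x = 0)
    (hm : ∀ x y : C, q (x * y) = q x * q y) (x y : C) :
    x*(x*y) = polar q x 1 • (x*y) + q x • y := by
  have hb : ∀ w : C, polar q (x*(x*y)) w = polar q x 1 * polar q (x*y) w - q x * polar q w y := by
    intro w
    have h := hx_II q hm x (x*y) 1 w
    rw [one_mul, one_mul] at h
    have h5 : polar q (x*w) (x*y) = q x * polar q w y := hx_L1a q hm x w y
    linear_combination h - h5
  have h6 : polar q (x*y) y = polar q x 1 * q y := by simpa using hx_L1b q hm x 1 y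
  have hz : x*(x*y) - (polar q x 1 • (x*y) + q x • y) = 0 := by
    apply hreg
    · intro w
      rw [polar_sub_left, polar_add_left, polar_smul_left, polar_smul_left, smul_eq_mul,
        smul_eq_mul, hb w]
      have hc : polar q w y = polar q y w := polar_comm _ _ _
      linear_combination (- (q x * polar q w y)) * h2 + q x * hc
    · rw [sub_eq_add_neg, hx_qadd, QuadraticMap.map_neg, polar_neg_right, hx_qadd,
        QuadraticMap.map_smul, QuadraticMap.map_smul, polar_smul_left, polar_smul_right,
        polar_add_right, polar_smul_right, polar_smul_right, hm, hm, hb (x*y), hb y,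
        hx_polarself q h2 (x*y), hx_polarself q h2 y, h6]
      simp only [smul_eq_mul]
      have hc : polar q (x*y) y = polar q y (x*y) := polar_comm _ _ _
      linear_combination (q x * q x * q y + polar q x 1 * polar q x 1 * q x * q y) * h2
  rw [sub_eq_zero] at hz; exact hz
end Aux

section Aux2
variable {F C : Type*} [Field F] [NonAssocRing C] [Module F C] [SMulCommClass F C C]
  [IsScalarTower F C C] (q : QuadraticForm F C)

lemma hx_A2 (h2 : (2:F) = 0)
    (hreg : ∀ x : C, (∀ y : C, polar q x y = 0) → q x = 0 → x = 0)
    (hm : ∀ x y : C, q (x * y) = q x * q y) (x y : C) :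
    (y*x)*x = polar q x 1 • (y*x) + q x • y := by
  have hb : ∀ w : C, polar q ((y*x)*x) w = polar q x 1 * polar q (y*x) w - q x * polar q w y := by
    intro w
    have h := hx_II q hm (y*x) x w 1
    rw [mul_one, mul_one] at h
    have h5 : polar q (y*x) (w*x) = polar q y w * q x := hx_L1b q hm y w x
    have hc : polar q y w = polar q w y := polar_comm _ _ _
    linear_combination h - h5 - q x * hc
  have h6 : polar q (y*x) y = q y * polar q x 1 := by
    have h7 : polar q y (y*x) = q y * polar q 1 x := by simpa using hx_L1a q hm y 1 x
    have hc : polar q (y*x) y = polar q y (y*x) := polar_comm _ _ _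
    have hc2 : polar q 1 x = polar q x 1 := polar_comm _ _ _
    linear_combination hc + h7 + q y * hc2
  have hz : (y*x)*x - (polar q x 1 • (y*x) + q x • y) = 0 := by
    apply hreg
    · intro w
      rw [polar_sub_left, polar_add_left, polar_smul_left, polar_smul_left, smul_eq_mul,
        smul_eq_mul, hb w]
      have hc : polar q w y = polar q y w := polar_comm _ _ _
      linear_combination (- (q x * polar q w y)) * h2 + q x * hc
    · rw [sub_eq_add_neg, hx_qadd, QuadraticMap.map_neg, polar_neg_right, hx_qadd,
        QuadraticMap.map_smul, QuadraticMap.map_smul, polar_smul_left, polar_smul_right,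
        polar_add_right, polar_smul_right, polar_smul_right, hm, hm, hb (y*x), hb y,
        hx_polarself q h2 (y*x), hx_polarself q h2 y, h6]
      simp only [smul_eq_mul]
      linear_combination (q x * q x * q y + polar q x 1 * polar q x 1 * q x * q y) * h2
  rw [sub_eq_zero] at hz; exact hz

lemma hx_linCH (h2 : (2:F) = 0)
    (hreg : ∀ x : C, (∀ y : C, polar q x y = 0) → q x = 0 → x = 0)
    (hm : ∀ x y : C, q (x * y) = q x * q y) (hq1 : q 1 = 1) (x y : C) :
    x*y + y*x = polar q x 1 • y + polar q y 1 • x + polar q x y • (1:C) := by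
  have h1 := hx_CH q h2 hreg hm hq1 (x+y)
  have e : (x+y)*(x+y) = x*x + x*y + (y*x + y*y) := by rw [add_mul, mul_add, mul_add]
  rw [e, polar_add_left, hx_qadd, hx_CH q h2 hreg hm hq1 x, hx_CH q h2 hreg hm hq1 y] at h1
  linear_combination (norm := module) h1

lemma hx_POL1 (hm : ∀ x y : C, q (x * y) = q x * q y) (a c : C) :
    polar q a c = polar q a 1 * polar q c 1 - polar q (a*c) 1 := by
  have h := hx_II q hm a 1 1 c
  rw [mul_one, one_mul, one_mul] at h
  have hc : polar q 1 c = polar q c 1 := polar_comm _ _ _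
  linear_combination h + polar q a 1 * hc
end Aux2



/-- for the Hurwitz superalgebra `C = CD(Q,α) = Q ⊕ Qu` in characteristic 2
with `dim Q = 2`, any grading by a group `G` generated by its support which is not an
elementary abelian 2-group forces `Q = C₀` to be split, and there is a canonical basis
`{e₁,e₂,u₁,v₁}` of homogeneous elements with `C₀⁰ = span{e₁,e₂}`, `C₁ᵍ = Fu₁`,
`C₁^{−g} = Fv₁` for some `g` of order `> 2`. -/
theorem CD_dim4_grading_not_elementary {F C G : Type*} [Field F] [NonAssocRing C]
    [Module F C] [SMulCommClass F C C] [IsScalarTower F C C] [CommGroup G] [DecidableEq G]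
    (hchar : ringChar F = 2)
    (q : QuadraticForm F C) (hreg : q.HurwitzRegular) (hmul : q.Multiplicative)
    (Q odd : Submodule F C)
    (hone : (1 : C) ∈ Q)
    (hcompl : IsCompl Q odd)
    (hQ2 : Module.finrank F Q = 2) (hC4 : Module.finrank F C = 4)
    (h_ee : ∀ a ∈ Q, ∀ b ∈ Q, a * b ∈ Q)
    (h_eo : ∀ a ∈ Q, ∀ b ∈ odd, a * b ∈ odd)
    (h_oe : ∀ a ∈ odd, ∀ b ∈ Q, a * b ∈ odd)
    (h_oo : ∀ a ∈ odd, ∀ b ∈ odd, a * b ∈ Q)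
    (u : C) (hu : u ∈ odd) (α : F) (hα : α ≠ 0) (hqu : q u = α)
    (hodd : odd = Submodule.map (LinearMap.mulRight F u) Q)
    (γ : G → Submodule F C) (hint : DirectSum.IsInternal γ)
    (hgrmul : ∀ g h : G, ∀ a ∈ γ g, ∀ c ∈ γ h, a * c ∈ γ (g * h))
    (hsuper : ∀ g : G, γ g = (γ g ⊓ Q) ⊔ (γ g ⊓ odd))
    (hgen : Subgroup.closure {g : G | γ g ≠ ⊥} = ⊤)
    (hnot2 : ¬ ∀ g : G, g * g = 1) :
    (∃ a ∈ Q, a ≠ 0 ∧ q a = 0) ∧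
    ∃ g : G, g * g ≠ 1 ∧ ∃ e₁ e₂ u₁ v₁ : C,
      e₁ + e₂ = 1 ∧ e₁ * e₁ = e₁ ∧ e₂ * e₂ = e₂ ∧ e₁ * e₂ = 0 ∧ e₂ * e₁ = 0 ∧
      e₁ * u₁ = u₁ ∧ u₁ * e₂ = u₁ ∧ e₂ * u₁ = 0 ∧ u₁ * e₁ = 0 ∧
      e₂ * v₁ = v₁ ∧ v₁ * e₁ = v₁ ∧ e₁ * v₁ = 0 ∧ v₁ * e₂ = 0 ∧
      u₁ * v₁ = -e₁ ∧ v₁ * u₁ = -e₂ ∧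
      u₁ ∈ odd ∧ v₁ ∈ odd ∧
      Submodule.span F {e₁, e₂} = Q ∧ Q ≤ γ 1 ∧
      γ g = Submodule.span F {u₁} ∧ γ g⁻¹ = Submodule.span F {v₁} := by
  classical
  have hreg' : ∀ x : C, (∀ y : C, polar q x y = 0) → q x = 0 → x = 0 := hreg
  have hmul' : ∀ x y : C, q (x * y) = q x * q y := hmul
  classical
  have h2F : (2:F) = 0 := by
    have h := (ringChar.spec F 2).mpr (by rw [hchar])
    exact_mod_cast h
  have hFneg : ∀ r : F, -r = r := by
    intro r
    exact neg_eq_of_add_eq_zero_left (by linear_combination r * h2F)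
  have hCadd : ∀ v : C, v + v = 0 := hx_addself h2F
  have hCneg : ∀ v : C, -v = v := hx_negself h2F
  have h1ne : (1:C) ≠ 0 := by
    intro h
    have hu0 : u = 0 := by rw [← mul_one u, h, mul_zero]
    exact hα (by rw [← hqu, hu0, map_zero])
  have hq1 : q 1 = 1 := by
    have h := hmul' 1 1
    rw [one_mul] at h
    have h0 : q 1 * (q 1 - 1) = 0 := by linear_combination -h
    rcases mul_eq_zero.mp h0 with h0 | h0
    · exfalso
      have hall : ∀ x : C, q x = 0 := by
        intro x
        have hx := hmul' x 1
        rw [mul_one, h0, mul_zero] at hx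
        exact hx
      apply h1ne
      apply hreg' 1 _ (hall 1)
      intro y
      simp [QuadraticMap.polar, hall]
    · exact sub_eq_zero.mp h0
  have hfd : FiniteDimensional F C := FiniteDimensional.of_finrank_pos (by rw [hC4]; norm_num)
  have hind : iSupIndep γ := hint.submodule_iSupIndep
  have htop : iSup γ = ⊤ := hint.submodule_iSup_eq_top
  have hdisj : ∀ {a b : G}, a ≠ b → ∀ v : C, v ∈ γ a → v ∈ γ b → v = 0 := by
    intro a b hab v ha hb
    exact (Submodule.disjoint_def.mp (hind.pairwiseDisjoint hab)) v ha hb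
  have hdisj2 : ∀ (a b c : G), a ≠ b → a ≠ c → ∀ v w z : C,
      v ∈ γ a → w ∈ γ b → z ∈ γ c → v = w + z → v = 0 := by
    intro a b c hab hac v w z hv hw hz he
    have hd : Disjoint (γ a) (⨆ i ∈ ({b, c} : Set G), γ i) :=
      hind.disjoint_biSup (by simp [hab, hac])
    apply (Submodule.disjoint_def.mp hd) v hv
    have hle : γ b ⊔ γ c ≤ ⨆ i ∈ ({b, c} : Set G), γ i := by
      apply sup_le
      · exact le_biSup γ (by simp)
      · exact le_biSup γ (by simp)
    exact hle (by rw [he]; exact Submodule.add_mem_sup hw hz)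
  -- identity component contains 1
  have hone1 : (1:C) ∈ γ (1:G) := by
    set S : Submodule F C := ⨆ (g : {g : G // g ≠ 1}), γ g.val with hS
    have hγleS : ∀ g : G, g ≠ 1 → γ g ≤ S := fun g hg =>
      le_iSup (fun g : {g : G // g ≠ 1} => γ g.val) ⟨g, hg⟩
    have htop2 : γ 1 ⊔ S = ⊤ := by
      apply le_antisymm le_top
      rw [← htop]
      apply iSup_le
      intro g
      by_cases hg : g = 1
      · subst hg; exact le_sup_left
      · exact le_trans (hγleS g hg) le_sup_right
    have hSd : ∀ h : G, Disjoint (γ h) (⨆ (j : {j : G // j ≠ h}), γ j.val) := by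
      intro h
      refine (hind h).mono_right ?_
      exact iSup_le fun j => le_iSup_of_le j.1 (le_iSup_of_le j.2 le_rfl)
    obtain ⟨a, ha, r, hr, har⟩ := Submodule.mem_sup.mp
      (htop2 ▸ (Submodule.mem_top : (1:C) ∈ (⊤ : Submodule F C)))
    have hrid : ∀ h : G, ∀ v ∈ γ h, v * a = v := by
      intro h v hv
      have hvr : v * r ∈ ⨆ (j : {j : G // j ≠ h}), γ j.val := by
        refine Submodule.iSup_induction (motive := fun z => v * z ∈ ⨆ (j : {j : G // j ≠ h}), γ j.val)
          (fun j : {j : G // j ≠ 1} => γ j.val) hr ?_ ?_ ?_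
        · intro j w hw
          show v * w ∈ _
          have hmem : v * w ∈ γ (h * j.1) := hgrmul h j.1 v hv w hw
          refine le_iSup (fun j : {j : G // j ≠ h} => γ j.val) ⟨h * j.1, ?_⟩ hmem
          simpa using j.2
        · show v * 0 ∈ _
          rw [mul_zero]; exact Submodule.zero_mem _
        · intro w₁ w₂ h1 h2
          show v * (w₁ + w₂) ∈ _
          rw [mul_add]; exact Submodule.add_mem _ h1 h2
      have hva : v * a ∈ γ h := by
        have := hgrmul h 1 v hv a ha
        rwa [mul_one] at this
      have heq : v * r = v - v * a := by
        have hsum : v * a + v * r = v := by rw [← mul_add, har, mul_one]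
        exact eq_sub_of_add_eq' hsum
      have h0 : v * r = 0 :=
        (Submodule.disjoint_def.mp (hSd h)) (v * r)
          (heq ▸ Submodule.sub_mem _ hv hva) hvr
      exact (sub_eq_zero.mp (heq.symm.trans h0)).symm
    have haid : ∀ v : C, v * a = v := by
      intro v
      set N : Submodule F C := LinearMap.ker (LinearMap.mulRight F a - LinearMap.id) with hN
      have hNmem : ∀ w : C, w ∈ N ↔ w * a = w := by
        intro w
        simp [hN, LinearMap.mem_ker, LinearMap.sub_apply, LinearMap.mulRight_apply,
          sub_eq_zero]
      have hle : (⊤ : Submodule F C) ≤ N := by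
        rw [← htop]
        exact iSup_le fun g w hw => (hNmem w).mpr (hrid g w hw)
      exact (hNmem v).mp (hle Submodule.mem_top)
    have ha1 : a = 1 := by
      have := haid 1
      rwa [one_mul] at this
    exact ha1 ▸ ha
  -- trace vanishing on non-identity components
  have TR : ∀ h : G, h ≠ 1 → ∀ z ∈ γ h, polar q z 1 = 0 := by
    intro h hh z hz
    by_cases hz0 : z = 0
    · simp [hz0]
    · have hzz : z * z ∈ γ (h * h) := hgrmul h h z hz z hz
      have hq1m : (q z) • (1:C) ∈ γ 1 := Submodule.smul_mem _ _ hone1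
      have hch := hx_CH q h2F hreg' hmul' hq1 z
      have htz : polar q z 1 • z = z * z + (q z) • (1:C) := by
        rw [hch, add_assoc, hCadd, add_zero]
      have hne1 : h ≠ h * h := by
        intro he
        exact hh (mul_left_cancel (a := h) (by rw [mul_one, ← he])).symm
      have h0 : polar q z 1 • z = 0 :=
        hdisj2 h (h*h) 1 hne1 hh _ _ _ (Submodule.smul_mem _ _ hz) hzz hq1m htz
      rcases smul_eq_zero.mp h0 with h0 | h0
      · exact h0
      · exact absurd h0 hz0
  -- orthogonality of components
  have OR : ∀ g' h' : G, g' * h' ≠ 1 → ∀ a' ∈ γ g', ∀ c' ∈ γ h', polar q a' c' = 0 := by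
    intro g' h' hgh a' ha' c' hc'
    have hac : a' * c' ∈ γ (g' * h') := hgrmul _ _ _ ha' _ hc'
    have h1 : polar q (a' * c') 1 = 0 := TR _ hgh _ hac
    have hcases : polar q a' 1 * polar q c' 1 = 0 := by
      by_cases hg1 : g' = 1
      · have hh1 : h' ≠ 1 := by subst hg1; simpa using hgh
        rw [TR h' hh1 c' hc', mul_zero]
      · rw [TR g' hg1 a' ha', zero_mul]
    rw [hx_POL1 q hmul' a' c', h1, hcases, sub_zero]
  -- a vector of Q independent from 1
  obtain ⟨c₀, hc₀Q, hc₀sp⟩ : ∃ c₀ ∈ Q, c₀ ∉ Submodule.span F {(1:C)} := by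
    by_contra hcon
    push_neg at hcon
    have hle : Q ≤ Submodule.span F {(1:C)} := fun x hx => hcon x hx
    have hfr := Submodule.finrank_mono (R := F) hle
    rw [hQ2, finrank_span_singleton h1ne] at hfr
    omega
  have hindep10 : ∀ (s t : F), s • (1:C) + t • c₀ = 0 → s = 0 ∧ t = 0 := by
    intro s t hst
    by_cases ht : t = 0
    · rw [ht, zero_smul, add_zero] at hst
      rcases smul_eq_zero.mp hst with h | h
      · exact ⟨h, ht⟩
      · exact absurd h h1ne
    · exfalso
      apply hc₀sp
      rw [Submodule.mem_span_singleton]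
      refine ⟨t⁻¹ * (-s), ?_⟩
      have hts : t • c₀ = (-s) • (1:C) := by
        rw [neg_smul, eq_neg_iff_add_eq_zero, add_comm]
        exact hst
      rw [mul_smul, ← hts, smul_smul, inv_mul_cancel₀ ht, one_smul]
  -- trace of u is zero and u ⊥ Q
  have hEu : ∀ c ∈ Q, polar q u 1 • c + polar q c u • (1:C) = 0 := by
    intro c hc
    have h := hx_linCH q h2F hreg' hmul' hq1 c u
    have hlhs : c * u + u * c ∈ odd :=
      Submodule.add_mem _ (h_eo c hc u hu) (h_oe u hu c hc)
    rw [h] at hlhs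
    have hmem : polar q u 1 • c + polar q c u • (1:C) ∈ odd := by
      have h2 : polar q c 1 • u ∈ odd := Submodule.smul_mem _ _ hu
      have h3 : polar q c 1 • u + (polar q u 1 • c + polar q c u • (1:C)) ∈ odd := by
        have : polar q c 1 • u + (polar q u 1 • c + polar q c u • (1:C))
            = polar q c 1 • u + polar q u 1 • c + polar q c u • (1:C) := by abel
        rw [this]
        exact hlhs
      have := Submodule.sub_mem _ h3 h2
      simpa using this
    have hmemQ : polar q u 1 • c + polar q c u • (1:C) ∈ Q :=
      Submodule.add_mem _ (Submodule.smul_mem _ _ hc) (Submodule.smul_mem _ _ hone)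
    exact (Submodule.disjoint_def.mp hcompl.disjoint) _ hmemQ hmem
  have htu : polar q u 1 = 0 := by
    have h := hEu c₀ hc₀Q
    have h2 : polar q c₀ u • (1:C) + polar q u 1 • c₀ = 0 := by rw [add_comm]; exact h
    exact (hindep10 _ _ h2).2
  have hbuQ : ∀ c ∈ Q, polar q u c = 0 := by
    intro c hc
    have h := hEu c hc
    rw [htu, zero_smul, zero_add] at h
    rcases smul_eq_zero.mp h with h | h
    · rw [polar_comm]; exact h
    · exact absurd h h1ne
  -- odd is orthogonal to Q
  have PERP : ∀ o ∈ odd, ∀ c ∈ Q, polar q o c = 0 := by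
    intro o ho c hc
    rw [hodd] at ho
    obtain ⟨c', hc', hcu⟩ := Submodule.mem_map.mp ho
    rw [LinearMap.mulRight_apply] at hcu
    have h := hx_II q hmul' c' u 1 c
    rw [one_mul, one_mul] at h
    have h1 : polar q (c' * c) u = 0 := by
      rw [polar_comm]; exact hbuQ (c' * c) (h_ee c' hc' c hc)
    have h2 : polar q u c = 0 := hbuQ c hc
    rw [← hcu]
    linear_combination h - h1 + polar q c' 1 * h2
  -- regularity inside Q
  have REGQ : ∀ z ∈ Q, (∀ d ∈ Q, polar q z d = 0) → q z = 0 → z = 0 := by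
    intro z hz hbz hqz
    apply hreg' z _ hqz
    intro w
    obtain ⟨d, hd, o, ho, hdo⟩ := Submodule.mem_sup.mp
      (hcompl.sup_eq_top ▸ (Submodule.mem_top : w ∈ (⊤ : Submodule F C)))
    rw [← hdo, polar_add_right, hbz d hd]
    have : polar q z o = 0 := by rw [polar_comm]; exact PERP o ho z hz
    rw [this, add_zero]
  -- support element of order > 2
  obtain ⟨g₀, hg₀ne, hg₀2⟩ : ∃ g₀ : G, γ g₀ ≠ ⊥ ∧ g₀ * g₀ ≠ 1 := by
    by_contra hcon
    push_neg at hcon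
    apply hnot2
    set H : Subgroup G :=
      { carrier := {g : G | g * g = 1}
        mul_mem' := by
          intro a b ha hb
          simp only [Set.mem_setOf_eq] at *
          rw [mul_mul_mul_comm, ha, hb, one_mul]
        one_mem' := by simp
        inv_mem' := by
          intro a ha
          simp only [Set.mem_setOf_eq] at *
          rw [← mul_inv_rev, ha, inv_one] } with hH
    have hsub : {g : G | γ g ≠ ⊥} ⊆ (H : Set G) := fun g hg => hcon g hg
    have hcl : (⊤ : Subgroup G) ≤ H := hgen ▸ (Subgroup.closure_le H).mpr hsub
    intro g
    exact hcl (Subgroup.mem_top g)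
  -- span of two independent vectors of Q equals Q
  have spanQ : ∀ v w : C, v ∈ Q → w ∈ Q →
      (∀ s t : F, s • v + t • w = 0 → s = 0 ∧ t = 0) → Submodule.span F {v, w} = Q := by
    intro v w hv hw hli'
    have hli : LinearIndependent F ![v, w] := LinearIndependent.pair_iff.mpr hli'
    have hle : Submodule.span F ({v, w} : Set C) ≤ Q := by
      rw [Submodule.span_le]
      intro z hz
      simp only [Set.mem_insert_iff, Set.mem_singleton_iff] at hz
      rcases hz with rfl | rfl
      · exact hv
      · exact hw
    apply Submodule.eq_of_le_of_finrank_le hle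
    have hrange : Set.range ![v, w] = {v, w} := by
      simp only [Matrix.range_cons, Matrix.range_empty, Set.union_empty,
        Set.union_singleton]
      exact Set.pair_comm w v
    have hr : Module.finrank F (Submodule.span F ({v, w} : Set C)) = 2 := by
      rw [← hrange, finrank_span_eq_card hli]
      simp
    rw [hQ2, hr]
  -- case B elimination
  have key : ∀ h : G, h ≠ 1 → ∀ w, w ∈ γ h ⊓ Q → w = 0 := by
    intro h hh w hw
    obtain ⟨hwγ, hwQ⟩ := hw
    by_contra hw0
    have hiw : ∀ s t : F, s • (1:C) + t • w = 0 → s = 0 ∧ t = 0 := by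
      intro s t hst
      have h1m : s • (1:C) ∈ γ 1 := Submodule.smul_mem _ _ hone1
      have h2m : t • w ∈ γ h := Submodule.smul_mem _ _ hwγ
      have heqtw : s • (1:C) = t • w := by
        have := eq_neg_of_add_eq_zero_left hst
        rwa [hCneg] at this
      have hs : s • (1:C) = 0 := hdisj (Ne.symm hh) _ h1m (heqtw ▸ h2m)
      constructor
      · rcases smul_eq_zero.mp hs with h' | h'
        · exact h'
        · exact absurd h' h1ne
      · rw [hs, zero_add] at hst
        rcases smul_eq_zero.mp hst with h' | h'
        · exact h'
        · exact absurd h' hw0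
    have hspw : Submodule.span F {(1:C), w} = Q := spanQ _ _ hone hwQ hiw
    have htw : polar q w 1 = 0 := TR h hh w hwγ
    have hb1w : polar q (1:C) w = 0 := by rw [polar_comm]; exact htw
    have hbwQ : ∀ d ∈ Q, polar q w d = 0 := by
      intro d hd
      rw [← hspw] at hd
      obtain ⟨s, t, hst⟩ := Submodule.mem_span_pair.mp hd
      rw [← hst, polar_add_right, polar_smul_right, polar_smul_right, htw,
        hx_polarself q h2F w]
      simp
    have hb1Q : ∀ d ∈ Q, polar q (1:C) d = 0 := by
      intro d hd
      rw [← hspw] at hd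
      obtain ⟨s, t, hst⟩ := Submodule.mem_span_pair.mp hd
      rw [← hst, polar_add_right, polar_smul_right, polar_smul_right, hb1w,
        hx_polarself q h2F (1:C)]
      simp
    have hanis : ∀ c ∈ Q, q c = 0 → c = 0 := by
      intro c hc hqc
      have hc' := hc
      rw [← hspw] at hc'
      obtain ⟨s, t, hst⟩ := Submodule.mem_span_pair.mp hc'
      have hqc' : s * s + t * t * q w = 0 := by
        rw [← hst, hx_qadd, QuadraticMap.map_smul, QuadraticMap.map_smul,
          polar_smul_left, polar_smul_right, hb1w] at hqc
        simp only [smul_eq_mul, hq1, mul_one, mul_zero, smul_zero, add_zero] at hqc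
        linear_combination hqc
      by_cases ht : t = 0
      · have hs : s = 0 := by
          rw [ht, mul_zero, zero_mul, add_zero] at hqc'
          exact mul_self_eq_zero.mp hqc'
        rw [← hst, hs, ht, zero_smul, zero_smul, add_zero]
      · exfalso
        set μ := s / t with hμ
        have hqw : q w = μ * μ := by
          have h9 : t * t * q w = s * s := by
            have h8 := hFneg (s * s)
            linear_combination hqc' + h8
          rw [hμ, div_mul_div_comm, eq_div_iff (mul_ne_zero ht ht)]
          linear_combination h9
        have hz : μ • (1:C) + w = 0 := by
          apply REGQ _ (Submodule.add_mem _ (Submodule.smul_mem _ _ hone) hwQ)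
          · intro d hd
            rw [polar_add_left, polar_smul_left, hbwQ d hd, hb1Q d hd]
            simp
          · rw [hx_qadd, QuadraticMap.map_smul, polar_smul_left, hb1w]
            simp only [smul_eq_mul, hq1, mul_one, mul_zero, add_zero]
            rw [hqw]
            linear_combination (μ * μ) * h2F
        have hwμ : w = μ • (1:C) := by
          have := eq_neg_of_add_eq_zero_right hz
          rwa [hCneg] at this
        exact hw0 (hdisj hh w hwγ (hwμ ▸ Submodule.smul_mem _ _ hone1))
    have hh2 : h * h = 1 := by
      by_contra hh2
      have hch := hx_CH q h2F hreg' hmul' hq1 w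
      rw [htw, zero_smul, zero_add] at hch
      have hww : w * w ∈ γ (h * h) := hgrmul h h w hwγ w hwγ
      have h0 : w * w = 0 := hdisj hh2 _ hww (hch ▸ Submodule.smul_mem _ _ hone1)
      have hqw : q w = 0 := by
        rw [h0] at hch
        rcases smul_eq_zero.mp hch.symm with h' | h'
        · exact h'
        · exact absurd h' h1ne
      exact hw0 (REGQ w hwQ hbwQ hqw)
    have hg₀1 : g₀ ≠ 1 := fun he => hg₀2 (by rw [he, one_mul])
    have hg₀h : g₀ ≠ h := fun he => hg₀2 (by rw [he, hh2])
    have hQle : Q ≤ γ 1 ⊔ γ h := by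
      rw [← hspw, Submodule.span_le]
      intro z hz
      simp only [Set.mem_insert_iff, Set.mem_singleton_iff] at hz
      rcases hz with rfl | rfl
      · exact le_sup_left (α := Submodule F C) hone1
      · exact le_sup_right (α := Submodule F C) hwγ
    have hdg : Disjoint (γ g₀) Q := by
      refine Disjoint.mono_right hQle ?_
      refine Disjoint.mono_right ?_ (hind.disjoint_biSup (x := g₀) (y := {1, h})
        (by simp [hg₀1, hg₀h]))
      apply sup_le
      · exact le_biSup γ (by simp)
      · exact le_biSup γ (by simp)
    have hg₀odd : γ g₀ ≤ odd := by
      calc γ g₀ = (γ g₀ ⊓ Q) ⊔ (γ g₀ ⊓ odd) := hsuper g₀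
        _ ≤ ⊥ ⊔ (γ g₀ ⊓ odd) := by rw [hdg.eq_bot]
        _ ≤ odd := by rw [bot_sup_eq]; exact inf_le_right
    obtain ⟨x, hxγ, hx0⟩ := (Submodule.ne_bot_iff _).mp hg₀ne
    have hxodd : x ∈ odd := hg₀odd hxγ
    have htx : polar q x 1 = 0 := PERP x hxodd 1 hone
    have hch := hx_CH q h2F hreg' hmul' hq1 x
    rw [htx, zero_smul, zero_add] at hch
    have hxx : x * x = 0 :=
      hdisj hg₀2 _ (hgrmul g₀ g₀ x hxγ x hxγ) (hch ▸ Submodule.smul_mem _ _ hone1)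
    have hqx : q x = 0 := by
      rw [hxx] at hch
      rcases smul_eq_zero.mp hch.symm with h' | h'
      · exact h'
      · exact absurd h' h1ne
    obtain ⟨c, hcQ, hcu⟩ := Submodule.mem_map.mp (hodd ▸ hxodd)
    rw [LinearMap.mulRight_apply] at hcu
    have hqc : q c = 0 := by
      have h5 := hmul' c u
      rw [hcu, hqx, hqu] at h5
      rcases mul_eq_zero.mp h5.symm with h' | h'
      · exact h'
      · exact absurd h' hα
    exact hx0 (by rw [← hcu, hanis c hcQ hqc, zero_mul])
  -- even part is in the identity component
  have hQγ1 : Q ≤ γ 1 := by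
    have h1 : ∀ g : G, γ g ≤ (γ 1 ⊓ Q) ⊔ odd := by
      intro g
      by_cases hg : g = 1
      · subst hg
        calc γ 1 = (γ 1 ⊓ Q) ⊔ (γ 1 ⊓ odd) := hsuper 1
          _ ≤ (γ 1 ⊓ Q) ⊔ odd := sup_le_sup le_rfl inf_le_right
      · have hbot : γ g ⊓ Q = ⊥ := by
          rw [Submodule.eq_bot_iff]
          exact fun w hw' => key g hg w hw'
        calc γ g = (γ g ⊓ Q) ⊔ (γ g ⊓ odd) := hsuper g
          _ ≤ ⊥ ⊔ odd := sup_le_sup (le_of_eq hbot) inf_le_right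
          _ ≤ (γ 1 ⊓ Q) ⊔ odd := by rw [bot_sup_eq]; exact le_sup_right
    have htop3 : (⊤ : Submodule F C) ≤ (γ 1 ⊓ Q) ⊔ odd := by
      rw [← htop]; exact iSup_le h1
    calc Q ≤ ((γ 1 ⊓ Q) ⊔ odd) ⊓ Q := le_inf (le_trans le_top htop3) le_rfl
      _ = (γ 1 ⊓ Q) ⊔ (odd ⊓ Q) := sup_inf_assoc_of_le odd inf_le_right
      _ = γ 1 ⊓ Q := by rw [hcompl.symm.disjoint.eq_bot, sup_bot_eq]
      _ ≤ γ 1 := inf_le_left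
  -- homogeneous components away from 1 are odd
  have hom_odd : ∀ g : G, g ≠ 1 → γ g ≤ odd := by
    intro g hg
    have hbot : γ g ⊓ Q ≤ ⊥ := by
      refine le_trans (inf_le_inf_left _ hQγ1) ?_
      rw [(hind.pairwiseDisjoint hg).eq_bot]
    calc γ g = (γ g ⊓ Q) ⊔ (γ g ⊓ odd) := hsuper g
      _ ≤ ⊥ ⊔ (γ g ⊓ odd) := sup_le_sup hbot le_rfl
      _ ≤ odd := by rw [bot_sup_eq]; exact inf_le_right
  have hg₀1 : g₀ ≠ 1 := fun he => hg₀2 (by rw [he, one_mul])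
  obtain ⟨x, hx, hx0⟩ := (Submodule.ne_bot_iff _).mp hg₀ne
  have hxodd : x ∈ odd := hom_odd g₀ hg₀1 hx
  have htx : polar q x 1 = 0 := PERP x hxodd 1 hone
  have hchx := hx_CH q h2F hreg' hmul' hq1 x
  rw [htx, zero_smul, zero_add] at hchx
  have hxx : x * x = 0 :=
    hdisj hg₀2 _ (hgrmul g₀ g₀ x hx x hx) (hchx ▸ Submodule.smul_mem _ _ hone1)
  have hqx : q x = 0 := by
    rw [hxx] at hchx
    rcases smul_eq_zero.mp hchx.symm with h' | h'
    · exact h'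
    · exact absurd h' h1ne
  -- find the dual partner y
  obtain ⟨k, y, hyk, hβ⟩ : ∃ k : G, ∃ y ∈ γ k, polar q x y ≠ 0 := by
    by_contra hcon
    push_neg at hcon
    have hall : ∀ w : C, polar q x w = 0 := by
      intro w
      have hle : (⊤ : Submodule F C) ≤ LinearMap.ker (polarBilin q x) := by
        rw [← htop]
        refine iSup_le fun g z hz => ?_
        rw [LinearMap.mem_ker]
        exact hcon g z hz
      have := hle (Submodule.mem_top (x := w))
      rwa [LinearMap.mem_ker, polarBilin_apply_apply] at this
    exact hx0 (hreg' x hall hqx)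
  have hk1 : g₀ * k = 1 := by
    by_contra hgk
    exact hβ (OR g₀ k hgk x hx y hyk)
  have hk : k = g₀⁻¹ := by
    have h := congrArg (fun z => g₀⁻¹ * z) hk1
    simpa [← mul_assoc] using h
  subst hk
  have hginv1 : g₀⁻¹ ≠ 1 := fun he => hg₀1 (by rwa [inv_eq_one] at he)
  have hginv2 : g₀⁻¹ * g₀⁻¹ ≠ 1 := by
    intro he
    apply hg₀2
    have : (g₀ * g₀)⁻¹ = 1 := by rw [mul_inv]; exact he
    rwa [inv_eq_one] at this
  have hyodd : y ∈ odd := hom_odd g₀⁻¹ hginv1 hyk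
  have hty : polar q y 1 = 0 := PERP y hyodd 1 hone
  have hchy := hx_CH q h2F hreg' hmul' hq1 y
  rw [hty, zero_smul, zero_add] at hchy
  have hyy : y * y = 0 :=
    hdisj hginv2 _ (hgrmul g₀⁻¹ g₀⁻¹ y hyk y hyk) (hchy ▸ Submodule.smul_mem _ _ hone1)
  have hqy : q y = 0 := by
    rw [hyy] at hchy
    rcases smul_eq_zero.mp hchy.symm with h' | h'
    · exact h'
    · exact absurd h' h1ne
  have hy0 : y ≠ 0 := by
    intro he
    apply hβ
    rw [he]
    simp
  set β := polar q x y with hβdef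
  set s := x * y with hsdef
  have hsQ : s ∈ Q := h_oo x hxodd y hyodd
  have hts : polar q s 1 = β := by
    have h := hx_POL1 q hmul' x y
    rw [htx, hty, zero_mul, zero_sub] at h
    rw [← hFneg (polar q s 1), ← h]
  have hqs : q s = 0 := by rw [hsdef, hmul', hqx, zero_mul]
  have hs0 : s ≠ 0 := by
    intro he
    apply hβ
    rw [← hts, he]
    simp
  have hsγ : s ∈ γ 1 := by
    have := hgrmul g₀ g₀⁻¹ x hx y hyk
    rwa [mul_inv_cancel] at this
  have hxs : x * s = 0 := by
    have h := hx_A1 q h2F hreg' hmul' x y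
    rw [htx, zero_smul, zero_add, hqx, zero_smul] at h
    rwa [← hsdef] at h
  have hsy : s * y = 0 := by
    have h := hx_A2 q h2F hreg' hmul' y x
    rw [hty, zero_smul, zero_add, hqy, zero_smul] at h
    rwa [← hsdef] at h
  have hbxs : polar q x s = 0 := by
    have h := hx_L1a q hmul' x 1 y
    rw [mul_one, hqx, zero_mul] at h
    exact h
  have hbys : polar q y s = 0 := by
    have h := hx_L1b q hmul' 1 x y
    rw [one_mul, hqy, mul_zero] at h
    exact h
  have hsx : s * x = β • x := by
    have h := hx_linCH q h2F hreg' hmul' hq1 x s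
    rwa [hxs, zero_add, htx, zero_smul, zero_add, hts, hbxs, zero_smul, add_zero] at h
  have hys : y * s = β • y := by
    have h := hx_linCH q h2F hreg' hmul' hq1 y s
    rwa [hsy, add_zero, hty, zero_smul, zero_add, hts, hbys, zero_smul, add_zero] at h
  have hss : s * s = β • s := by
    have h := hx_CH q h2F hreg' hmul' hq1 s
    rwa [hts, hqs, zero_smul, add_zero] at h
  have hyx : y * x = β • (1:C) - s := by
    have h := hx_linCH q h2F hreg' hmul' hq1 x y
    rw [htx, hty, zero_smul, zero_smul, zero_add, zero_add] at h
    exact eq_sub_of_add_eq' h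
  -- the canonical basis
  set e₁ : C := β⁻¹ • s with he₁def
  set e₂ : C := 1 - e₁ with he₂def
  have P2 : e₁ * e₁ = e₁ := by
    rw [he₁def, smul_mul_assoc, mul_smul_comm, hss, smul_smul, smul_smul]
    congr 1
    field_simp
  have P6 : e₁ * x = x := by
    rw [he₁def, smul_mul_assoc, hsx, smul_smul, inv_mul_cancel₀ hβ, one_smul]
  have P7 : x * e₁ = 0 := by
    rw [he₁def, mul_smul_comm, hxs, smul_zero]
  have P10' : e₁ * y = 0 := by
    rw [he₁def, smul_mul_assoc, hsy, smul_zero]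
  have P11' : y * e₁ = y := by
    rw [he₁def, mul_smul_comm, hys, smul_smul, inv_mul_cancel₀ hβ, one_smul]
  have he₁Q : e₁ ∈ Q := Submodule.smul_mem _ _ hsQ
  have he₂Q : e₂ ∈ Q := Submodule.sub_mem _ hone he₁Q
  have hte₁ : polar q e₁ 1 = 1 := by
    rw [he₁def, polar_smul_left, hts, smul_eq_mul, inv_mul_cancel₀ hβ]
  have hte₂ : polar q e₂ 1 = 1 := by
    rw [he₂def, polar_sub_left, hx_polarself q h2F (1:C), hte₁, zero_sub]
    exact hFneg 1
  have he₁0 : e₁ ≠ 0 := by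
    intro he
    rw [he] at hte₁
    simp at hte₁
  have he₂0 : e₂ ≠ 0 := by
    intro he
    rw [he] at hte₂
    simp at hte₂
  refine ⟨⟨s, hsQ, hs0, hqs⟩, g₀, hg₀2, e₁, e₂, x, β⁻¹ • y, ?_⟩
  have P1 : e₁ + e₂ = 1 := by rw [he₂def]; abel
  have P3 : e₁ * e₂ = 0 := by rw [he₂def, mul_sub, mul_one, P2, sub_self]
  have P4 : e₂ * e₁ = 0 := by rw [he₂def, sub_mul, one_mul, P2, sub_self]
  have P5 : e₂ * e₂ = e₂ := by rw [he₂def, sub_mul, one_mul, mul_sub, mul_one, P2]; abel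
  have P8 : x * e₂ = x := by rw [he₂def, mul_sub, mul_one, P7, sub_zero]
  have P9 : e₂ * x = 0 := by rw [he₂def, sub_mul, one_mul, P6, sub_self]
  have P10 : e₁ * (β⁻¹ • y) = 0 := by rw [mul_smul_comm, P10', smul_zero]
  have P11 : (β⁻¹ • y) * e₁ = β⁻¹ • y := by rw [smul_mul_assoc, P11']
  have P12 : e₂ * (β⁻¹ • y) = β⁻¹ • y := by
    rw [he₂def, sub_mul, one_mul, mul_smul_comm, P10', smul_zero, sub_zero]
  have P13 : (β⁻¹ • y) * e₂ = 0 := by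
    rw [he₂def, mul_sub, mul_one, P11, sub_self]
  have P14 : x * (β⁻¹ • y) = -e₁ := by
    rw [hCneg, mul_smul_comm, he₁def, hsdef]
  have P15 : (β⁻¹ • y) * x = -e₂ := by
    rw [hCneg, smul_mul_assoc, hyx, smul_sub, smul_smul, inv_mul_cancel₀ hβ, one_smul,
      he₂def, he₁def]
  have hv₁odd : β⁻¹ • y ∈ odd := Submodule.smul_mem _ _ hyodd
  -- span of e₁, e₂ is Q
  have hspan : Submodule.span F {e₁, e₂} = Q := by
    apply spanQ e₁ e₂ he₁Q he₂Q
    intro sc tc hst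
    have hsc : sc • e₁ = 0 := by
      have h := congrArg (fun z => e₁ * z) hst
      simp only [mul_add, mul_smul_comm, P2, P3, smul_zero, add_zero, mul_zero] at h
      exact h
    have hsc0 : sc = 0 := by
      rcases smul_eq_zero.mp hsc with h' | h'
      · exact h'
      · exact absurd h' he₁0
    refine ⟨hsc0, ?_⟩
    rw [hsc0, zero_smul, zero_add] at hst
    rcases smul_eq_zero.mp hst with h' | h'
    · exact h'
    · exact absurd h' he₂0
  -- dimensions of the odd components
  have hodd2 : Module.finrank F odd = 2 := by
    have h := Submodule.finrank_add_eq_of_isCompl hcompl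
    rw [hQ2, hC4] at h
    omega
  have hxle : Submodule.span F {x} ≤ γ g₀ := by
    rw [Submodule.span_le, Set.singleton_subset_iff]
    exact hx
  have hyle : Submodule.span F {y} ≤ γ g₀⁻¹ := by
    rw [Submodule.span_le, Set.singleton_subset_iff]
    exact hyk
  have hne : g₀ ≠ g₀⁻¹ := by
    intro he
    apply hg₀2
    nth_rewrite 2 [he]
    rw [mul_inv_cancel]
  have hfr := Submodule.finrank_sup_add_finrank_inf_eq (γ g₀) (γ g₀⁻¹)
  rw [(hind.pairwiseDisjoint hne).eq_bot, finrank_bot, add_zero] at hfr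
  have h1le : Module.finrank F ↥(γ g₀ ⊔ γ g₀⁻¹) ≤ 2 := by
    rw [← hodd2]
    exact Submodule.finrank_mono (sup_le (hom_odd g₀ hg₀1) (hom_odd g₀⁻¹ hginv1))
  have hx1 : 1 ≤ Module.finrank F ↥(γ g₀) := by
    have h := Submodule.finrank_mono (R := F) hxle
    rwa [finrank_span_singleton hx0] at h
  have hy1 : 1 ≤ Module.finrank F ↥(γ g₀⁻¹) := by
    have h := Submodule.finrank_mono (R := F) hyle
    rwa [finrank_span_singleton hy0] at h
  have hfrg : Module.finrank F ↥(γ g₀) = 1 ∧ Module.finrank F ↥(γ g₀⁻¹) = 1 := by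
    constructor <;> omega
  have hγx : γ g₀ = Submodule.span F {x} := by
    refine (Submodule.eq_of_le_of_finrank_le hxle ?_).symm
    rw [finrank_span_singleton hx0, hfrg.1]
  have hγy : γ g₀⁻¹ = Submodule.span F {β⁻¹ • y} := by
    rw [Submodule.span_singleton_smul_eq (IsUnit.mk0 _ (inv_ne_zero hβ)) y]
    refine (Submodule.eq_of_le_of_finrank_le hyle ?_).symm
    rw [finrank_span_singleton hy0, hfrg.2]
  exact ⟨P1, P2, P5, P3, P4, P6, P8, P9, P7, P12, P11, P10, P13, P14, P15,
    hxodd, hv₁odd, hspan, hQγ1, hγx, hγy⟩
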